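/- Let H be an n×n Hermitian complex matrix and let γ : ℝ → (n×n complex matrices) be a curve such that for every t ∈ ℝ, γ is differentiable at t with derivative γ'(t) = -i·H·γ(t) (an integral curve of the Hamiltonian vector field h_W = -iHW). Then the projected curve ρ(t) = γ(t)·γ(t)ᴴ is differentiable at every t with derivative ρ'(t) = -i·(H·ρ(t) - ρ(t)·H); that is, the projection of the integral curve to the base manifold of density matrices satisfies the von Neumann equation. -/

import Mathlib

open Matrix

attribute [local instance] Matrix.linftyOpNormedAddCommGroup Matrix.linftyOpNormedRing
  Matrix.linftyOpNormedAlgebra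

/-- If `γ` is an integral curve of the Hamiltonian vector field `h_W = -iHW`, then the
projected curve `ρ(t) = γ(t)·γ(t)ᴴ` on the base manifold of density matrices satisfies
the von Neumann equation `ρ'(t) = -i(Hρ(t) - ρ(t)H)`. -/
theorem projection_satisfies_vonNeumann {n : ℕ} (H : Matrix (Fin n) (Fin n) ℂ)
    (hH : H.IsHermitian) (γ : ℝ → Matrix (Fin n) (Fin n) ℂ)
    (hγ : ∀ t : ℝ, HasDerivAt γ ((-Complex.I) • (H * γ t)) t) (t : ℝ) :
    HasDerivAt (fun s : ℝ => γ s * (γ s)ᴴ)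
      ((-Complex.I) • (H * (γ t * (γ t)ᴴ) - (γ t * (γ t)ᴴ) * H)) t := by
  have h1 := hγ t
  have h2 : HasDerivAt (fun s => (γ s)ᴴ)
      (Complex.I • ((γ t)ᴴ * H)) t := by
    have : @ContinuousStar (Matrix (Fin n) (Fin n) ℂ)
      (Matrix.linftyOpNormedAddCommGroup (m := Fin n) (n := Fin n) (α := ℂ)).toUniformSpace.toTopologicalSpace _ := ⟨(continuous_star : Continuous (star : Matrix (Fin n) (Fin n) ℂ → _))⟩
    have := h1.star
    refine this.congr_deriv ?_
    show ((-Complex.I) • (H * γ t))ᴴ = Complex.I • ((γ t)ᴴ * H)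
    rw [conjTranspose_smul, conjTranspose_mul, hH.eq]
    simp [Matrix.mul_smul, Matrix.smul_mul]
  have := h1.mul h2
  refine this.congr_deriv ?_
  rw [Matrix.mul_smul, Matrix.smul_mul, smul_sub]
  simp [mul_assoc, sub_eq_add_neg, neg_smul]
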